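/- For n ≥ 4, the affine hull of the symmetric Traveling Salesman Polytope ST_n equals the set of symmetric n×n matrices with zero diagonal whose row sums and column sums all equal 2. -/
import Mathlib


/-- The set of adjacency matrices of Hamiltonian cycles on `n` vertices. -/
def hamiltonianCycleMatrices (n : ℕ) [NeZero n] : Set (Matrix (ZMod n) (ZMod n) ℝ) :=
  {M | ∃ σ : Equiv.Perm (ZMod n),
    ∀ i j, M i j = if σ i = σ j + 1 ∨ σ j = σ i + 1 then 1 else 0}

/-- The symmetric Traveling Salesman Polytope. -/
def symmetricTSP (n : ℕ) [NeZero n] : Set (Matrix (ZMod n) (ZMod n) ℝ) :=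
  convexHull ℝ (hamiltonianCycleMatrices n)

namespace TSPAux
set_option linter.unusedSectionVars false

variable {n : ℕ} [NeZero n]

omit [NeZero n] in
lemma natCast_ne (hn : 4 ≤ n) (k : ℕ) (hk : 0 < k) (hk4 : k ≤ 3) : (k : ZMod n) ≠ 0 := by
  intro h
  have h1 := (ZMod.natCast_eq_zero_iff k n).1 h
  have h2 := Nat.le_of_dvd hk h1
  omega

lemma one_ne (hn : 4 ≤ n) : (1 : ZMod n) ≠ 0 := by
  have := natCast_ne hn 1 (by norm_num) (by norm_num); simpa using this

lemma two_ne (hn : 4 ≤ n) : (2 : ZMod n) ≠ 0 := by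
  have := natCast_ne hn 2 (by norm_num) (by norm_num); simpa using this

lemma three_ne (hn : 4 ≤ n) : (3 : ZMod n) ≠ 0 := by
  have := natCast_ne hn 3 (by norm_num) (by norm_num); simpa using this

/-- Adjacency matrix of the Hamiltonian cycle given by a permutation. -/
def cycM (σ : Equiv.Perm (ZMod n)) : Matrix (ZMod n) (ZMod n) ℝ :=
  fun i j => if σ i = σ j + 1 ∨ σ j = σ i + 1 then 1 else 0

lemma cycM_mem (σ : Equiv.Perm (ZMod n)) : cycM σ ∈ hamiltonianCycleMatrices n :=
  ⟨σ, fun _ _ => rfl⟩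

lemma cycM_symm (σ : Equiv.Perm (ZMod n)) (i j : ZMod n) : cycM σ i j = cycM σ j i := by
  simp only [cycM]
  exact if_congr or_comm rfl rfl

lemma cycM_diag (hn : 4 ≤ n) (σ : Equiv.Perm (ZMod n)) (i : ZMod n) : cycM σ i i = 0 := by
  simp only [cycM, or_self]
  rw [if_neg]
  intro h
  exact one_ne hn (by linear_combination -h)

lemma sum_indicator_eq (c : ZMod n) : (∑ k : ZMod n, if k = c then (1:ℝ) else 0) = 1 := by
  simp

lemma cycM_rowsum (hn : 4 ≤ n) (σ : Equiv.Perm (ZMod n)) (i : ZMod n) :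
    ∑ j, cycM σ i j = 2 := by
  have hsplit : ∀ j, cycM σ i j =
      (if σ j = σ i + 1 then (1:ℝ) else 0) + (if σ j = σ i - 1 then 1 else 0) := by
    intro j
    simp only [cycM]
    by_cases h1 : σ j = σ i + 1
    · have h2 : ¬ σ j = σ i - 1 := fun h2 => two_ne hn (by linear_combination h2 - h1)
      rw [if_pos (Or.inr h1), if_pos h1, if_neg h2]; norm_num
    · by_cases h2 : σ j = σ i - 1
      · have h3 : σ i = σ j + 1 := by linear_combination -h2
        rw [if_pos (Or.inl h3), if_pos h2, if_neg h1]; norm_num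
      · have h3 : ¬ σ i = σ j + 1 := fun h3 => h2 (by linear_combination -h3)
        rw [if_neg (by tauto), if_neg h1, if_neg h2]; norm_num
  calc ∑ j, cycM σ i j
      = (∑ j, if σ j = σ i + 1 then (1:ℝ) else 0)
        + (∑ j, if σ j = σ i - 1 then (1:ℝ) else 0) := by
        rw [← Finset.sum_add_distrib]; exact Finset.sum_congr rfl fun j _ => hsplit j
    _ = 2 := by
        rw [Equiv.sum_comp σ (fun k => if k = σ i + 1 then (1:ℝ) else 0),
          Equiv.sum_comp σ (fun k => if k = σ i - 1 then (1:ℝ) else 0),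
          sum_indicator_eq, sum_indicator_eq]
        norm_num

/-- Symmetrized elementary matrix. -/
def sE (a b : ZMod n) : Matrix (ZMod n) (ZMod n) ℝ :=
  Matrix.single a b 1 + Matrix.single b a 1

/-- The 2-opt move difference matrix. -/
def Dm (a b c d : ZMod n) : Matrix (ZMod n) (ZMod n) ℝ :=
  sE a b + sE c d - sE a c - sE b d

/-- The direction space: symmetric, zero diagonal, zero row sums. -/
def Tsub (n : ℕ) [NeZero n] : Submodule ℝ (Matrix (ZMod n) (ZMod n) ℝ) where
  carrier := {x | (∀ i j, x i j = x j i) ∧ (∀ i, x i i = 0) ∧ (∀ i, ∑ j, x i j = 0)}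
  add_mem' := by
    rintro x y ⟨hs, hd, hr⟩ ⟨hs', hd', hr'⟩
    refine ⟨fun i j => ?_, fun i => ?_, fun i => ?_⟩
    · simp [Matrix.add_apply, hs i j, hs' i j]
    · simp [Matrix.add_apply, hd i, hd' i]
    · simp [Matrix.add_apply, Finset.sum_add_distrib, hr i, hr' i]
  zero_mem' := by
    refine ⟨fun i j => rfl, fun i => rfl, fun i => ?_⟩
    simp
  smul_mem' := by
    rintro c x ⟨hs, hd, hr⟩
    refine ⟨fun i j => ?_, fun i => ?_, fun i => ?_⟩
    · simp [Matrix.smul_apply, hs i j]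
    · simp [Matrix.smul_apply, hd i]
    · simp [Matrix.smul_apply, ← Finset.mul_sum, hr i]

/-- The generators : 2-opt differences for distinct quadruples. -/
def genD (n : ℕ) [NeZero n] : Set (Matrix (ZMod n) (ZMod n) ℝ) :=
  {x | ∃ a b c d : ZMod n, a ≠ b ∧ a ≠ c ∧ a ≠ d ∧ b ≠ c ∧ b ≠ d ∧ c ≠ d ∧
    x = Dm a b c d}

/-- The reversal permutation used for 2-opt moves. -/
def rPerm (n : ℕ) [NeZero n] : Equiv.Perm (ZMod n) :=
  (Function.Involutive.toPerm (fun k => -1 - k) (fun k => by ring)) * Equiv.swap 0 (-1)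

lemma rPerm_zero : rPerm n 0 = 0 := by
  simp [rPerm, Equiv.swap_apply_left, Function.Involutive.toPerm]

lemma rPerm_neg_one : rPerm n (-1) = -1 := by
  simp [rPerm, Equiv.swap_apply_right, Function.Involutive.toPerm]

lemma rPerm_other {k : ZMod n} (h0 : k ≠ 0) (h1 : k ≠ -1) : rPerm n k = -1 - k := by
  simp [rPerm, Equiv.swap_apply_of_ne_of_ne h0 h1, Function.Involutive.toPerm]

lemma rPerm_one (hn : 4 ≤ n) : rPerm n 1 = -2 := by
  rw [rPerm_other (one_ne hn) (fun h => two_ne hn (by linear_combination h))]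
  ring

lemma rPerm_neg_two (hn : 4 ≤ n) : rPerm n (-2) = 1 := by
  rw [rPerm_other (fun h => two_ne hn (by linear_combination -h))
    (fun h => one_ne hn (by linear_combination -h))]
  ring

lemma exists_perm (hn : 4 ≤ n) {a b c d : ZMod n} (hab : a ≠ b) (hac : a ≠ c) (had : a ≠ d)
    (hbc : b ≠ c) (hbd : b ≠ d) (hcd : c ≠ d) :
    ∃ σ : Equiv.Perm (ZMod n), σ a = 0 ∧ σ b = 1 ∧ σ c = -2 ∧ σ d = -1 := by
  have h01 : (0 : ZMod n) ≠ 1 := fun h => one_ne hn h.symm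
  have h0m1 : (0 : ZMod n) ≠ -1 := fun h => one_ne hn (by linear_combination h)
  have h0m2 : (0 : ZMod n) ≠ -2 := fun h => two_ne hn (by linear_combination h)
  have h1m1 : (1 : ZMod n) ≠ -1 := fun h => two_ne hn (by linear_combination h)
  have h1m2 : (1 : ZMod n) ≠ -2 := fun h => three_ne hn (by linear_combination h)
  have hm2m1 : (-2 : ZMod n) ≠ -1 := fun h => one_ne hn (by linear_combination -h)
  set s1 := Equiv.swap a 0 with hs1
  set b1 := s1 b with hb1
  set c1 := s1 c with hc1
  set d1 := s1 d with hd1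
  have hb10 : b1 ≠ 0 := by
    rw [hb1, ← Equiv.swap_apply_left a 0]
    exact fun h => hab (s1.injective h).symm
  have hc10 : c1 ≠ 0 := by
    rw [hc1, ← Equiv.swap_apply_left a 0]
    exact fun h => hac (s1.injective h).symm
  have hd10 : d1 ≠ 0 := by
    rw [hd1, ← Equiv.swap_apply_left a 0]
    exact fun h => had (s1.injective h).symm
  have hb1c1 : b1 ≠ c1 := fun h => hbc (s1.injective h)
  have hb1d1 : b1 ≠ d1 := fun h => hbd (s1.injective h)
  have hc1d1 : c1 ≠ d1 := fun h => hcd (s1.injective h)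
  set s2 := Equiv.swap b1 1 with hs2
  have hs20 : s2 0 = 0 := Equiv.swap_apply_of_ne_of_ne (Ne.symm hb10) h01
  set c2 := s2 c1 with hc2
  set d2 := s2 d1 with hd2
  have hc20 : c2 ≠ 0 := by rw [hc2, ← hs20]; exact fun h => hc10 (s2.injective h)
  have hd20 : d2 ≠ 0 := by rw [hd2, ← hs20]; exact fun h => hd10 (s2.injective h)
  have hc21 : c2 ≠ 1 := by
    rw [hc2, ← Equiv.swap_apply_left b1 1]
    exact fun h => hb1c1 (s2.injective h).symm
  have hd21 : d2 ≠ 1 := by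
    rw [hd2, ← Equiv.swap_apply_left b1 1]
    exact fun h => hb1d1 (s2.injective h).symm
  have hc2d2 : c2 ≠ d2 := fun h => hc1d1 (s2.injective h)
  set s3 := Equiv.swap c2 (-2) with hs3
  have hs30 : s3 0 = 0 := Equiv.swap_apply_of_ne_of_ne (Ne.symm hc20) h0m2
  have hs31 : s3 1 = 1 := Equiv.swap_apply_of_ne_of_ne (Ne.symm hc21) h1m2
  set d3 := s3 d2 with hd3
  have hd30 : d3 ≠ 0 := by rw [hd3, ← hs30]; exact fun h => hd20 (s3.injective h)
  have hd31 : d3 ≠ 1 := by rw [hd3, ← hs31]; exact fun h => hd21 (s3.injective h)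
  have hd3m2 : d3 ≠ -2 := by
    rw [hd3, ← Equiv.swap_apply_left c2 (-2)]
    exact fun h => hc2d2 (s3.injective h).symm
  set s4 := Equiv.swap d3 (-1) with hs4
  have hs40 : s4 0 = 0 := Equiv.swap_apply_of_ne_of_ne (Ne.symm hd30) h0m1
  have hs41 : s4 1 = 1 := Equiv.swap_apply_of_ne_of_ne (Ne.symm hd31) h1m1
  have hs4m2 : s4 (-2) = -2 := Equiv.swap_apply_of_ne_of_ne (Ne.symm hd3m2) hm2m1
  refine ⟨((s4 * s3) * s2) * s1, ?_, ?_, ?_, ?_⟩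
  · show s4 (s3 (s2 (s1 a))) = 0
    rw [show s1 a = 0 from Equiv.swap_apply_left a 0, hs20, hs30, hs40]
  · show s4 (s3 (s2 (s1 b))) = 1
    rw [← hb1, show s2 b1 = 1 from Equiv.swap_apply_left b1 1, hs31, hs41]
  · show s4 (s3 (s2 (s1 c))) = -2
    rw [← hc1, ← hc2, show s3 c2 = -2 from Equiv.swap_apply_left c2 (-2), hs4m2]
  · show s4 (s3 (s2 (s1 d))) = -1
    rw [← hd1, ← hd2, ← hd3, show s4 d3 = -1 from Equiv.swap_apply_left d3 (-1)]


lemma key (hn : 4 ≤ n) (k l : ZMod n) :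
    ((if k = l + 1 ∨ l = k + 1 then (1:ℝ) else 0)
      - (if rPerm n k = rPerm n l + 1 ∨ rPerm n l = rPerm n k + 1 then 1 else 0))
    = ((if k = 0 ∧ l = 1 ∨ k = 1 ∧ l = 0 then (1:ℝ) else 0)
      + (if k = -2 ∧ l = -1 ∨ k = -1 ∧ l = -2 then 1 else 0)
      - (if k = 0 ∧ l = -2 ∨ k = -2 ∧ l = 0 then 1 else 0)
      - (if k = 1 ∧ l = -1 ∨ k = -1 ∧ l = 1 then 1 else 0)) := by
  have c10 : ¬((1:ZMod n) = 0) := one_ne hn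
  have c01 : ¬((0:ZMod n) = 1) := fun h => c10 h.symm
  have c0m1 : ¬((0:ZMod n) = -1) := fun h => one_ne hn (by linear_combination h)
  have cm10 : ¬((-1:ZMod n) = 0) := fun h => c0m1 h.symm
  have c0m2 : ¬((0:ZMod n) = -2) := fun h => two_ne hn (by linear_combination h)
  have cm20 : ¬((-2:ZMod n) = 0) := fun h => c0m2 h.symm
  have c1m1 : ¬((1:ZMod n) = -1) := fun h => two_ne hn (by linear_combination h)
  have cm11 : ¬((-1:ZMod n) = 1) := fun h => c1m1 h.symm
  have c1m2 : ¬((1:ZMod n) = -2) := fun h => three_ne hn (by linear_combination h)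
  have cm21 : ¬((-2:ZMod n) = 1) := fun h => c1m2 h.symm
  have cm1m2 : ¬((-1:ZMod n) = -2) := fun h => one_ne hn (by linear_combination h)
  have cm2m1 : ¬((-2:ZMod n) = -1) := fun h => cm1m2 h.symm
  by_cases hk0 : k = 0
  · subst hk0
    by_cases hl0 : l = 0
    · subst hl0
      rw [rPerm_zero]
      simp [c01, c0m1, c0m2]
    · by_cases hlm : l = -1
      · subst hlm
        rw [rPerm_zero, rPerm_neg_one]
        simp [cm11, cm1m2, c01, c0m1, c0m2]
      · rw [rPerm_zero, rPerm_other hl0 hlm]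
        have a1 : ((0:ZMod n) = l + 1) ↔ False :=
          iff_false_intro (fun h => hlm (by linear_combination -h))
        have a2 : ((0:ZMod n) = -1 - l + 1) ↔ False :=
          iff_false_intro (fun h => hl0 (by linear_combination h))
        have a2' : ((0:ZMod n) = -l) ↔ False :=
          iff_false_intro (fun h => hl0 (by linear_combination h))
        have a3 : ((-1 - l : ZMod n) = 0 + 1) ↔ l = -2 :=
          ⟨fun h => by linear_combination -h, fun h => by linear_combination -h⟩
        have a3' : ((-1 - l : ZMod n) = 1) ↔ l = -2 :=
          ⟨fun h => by linear_combination -h, fun h => by linear_combination -h⟩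
        simp [a1, a2, a2', a3, a3', hl0, hlm, c01, c0m1, c0m2]
  · by_cases hkm : k = -1
    · subst hkm
      by_cases hl0 : l = 0
      · subst hl0
        rw [rPerm_zero, rPerm_neg_one]
        simp [cm11, cm1m2, c01, c0m2, cm10, c0m1]
      · by_cases hlm : l = -1
        · subst hlm
          rw [rPerm_neg_one]
          simp [cm10, cm11, cm1m2]
        · rw [rPerm_neg_one, rPerm_other hl0 hlm]
          have a1 : ((-1:ZMod n) = l + 1) ↔ l = -2 :=
            ⟨fun h => by linear_combination -h, fun h => by linear_combination -h⟩
          have a2 : ((-1:ZMod n) = -1 - l + 1) ↔ l = 1 :=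
            ⟨fun h => by linear_combination h, fun h => by linear_combination h⟩
          have a2' : ((-1:ZMod n) = -l) ↔ l = 1 :=
            ⟨fun h => by linear_combination h, fun h => by linear_combination h⟩
          have a3 : ((-1 - l : ZMod n) = -1 + 1) ↔ False :=
            iff_false_intro (fun h => hlm (by linear_combination -h))
          have a3' : ((-1 - l : ZMod n) = 0) ↔ False :=
            iff_false_intro (fun h => hlm (by linear_combination -h))
          simp [a1, a2, a2', a3, a3', hl0, hlm, cm10, cm11, cm1m2]
    · -- k not 0, not -1
      by_cases hl0 : l = 0
      · subst hl0
        rw [rPerm_zero, rPerm_other hk0 hkm]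
        have b1 : ((0:ZMod n) = k + 1) ↔ False :=
          iff_false_intro (fun h => hkm (by linear_combination -h))
        have b2 : ((-1 - k : ZMod n) = 0 + 1) ↔ k = -2 :=
          ⟨fun h => by linear_combination -h, fun h => by linear_combination -h⟩
        have b2' : ((-1 - k : ZMod n) = 1) ↔ k = -2 :=
          ⟨fun h => by linear_combination -h, fun h => by linear_combination -h⟩
        have b3 : ((0:ZMod n) = -1 - k + 1) ↔ False :=
          iff_false_intro (fun h => hk0 (by linear_combination h))
        have b3' : ((0:ZMod n) = -k) ↔ False :=
          iff_false_intro (fun h => hk0 (by linear_combination h))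
        simp [b1, b2, b2', b3, b3', hk0, hkm, c01, c0m1, c0m2]
      · by_cases hlm : l = -1
        · subst hlm
          rw [rPerm_neg_one, rPerm_other hk0 hkm]
          have b1 : ((-1:ZMod n) = k + 1) ↔ k = -2 :=
            ⟨fun h => by linear_combination -h, fun h => by linear_combination -h⟩
          have b2 : ((-1 - k : ZMod n) = -1 + 1) ↔ False :=
            iff_false_intro (fun h => hkm (by linear_combination -h))
          have b2' : ((-1 - k : ZMod n) = 0) ↔ False :=
            iff_false_intro (fun h => hkm (by linear_combination -h))
          have b3 : ((-1:ZMod n) = -1 - k + 1) ↔ k = 1 :=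
            ⟨fun h => by linear_combination h, fun h => by linear_combination h⟩
          have b3' : ((-1:ZMod n) = -k) ↔ k = 1 :=
            ⟨fun h => by linear_combination h, fun h => by linear_combination h⟩
          simp [b1, b2, b2', b3, b3', hk0, hkm, cm10, cm11, cm1m2]
        · -- both generic
          rw [rPerm_other hk0 hkm, rPerm_other hl0 hlm]
          have e1 : ((-1 - k : ZMod n) = -1 - l + 1) ↔ l = k + 1 :=
            ⟨fun h => by linear_combination h, fun h => by linear_combination h⟩
          have e1' : ((-1 - k : ZMod n) = -l) ↔ l = k + 1 :=
            ⟨fun h => by linear_combination h, fun h => by linear_combination h⟩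
          have e2 : ((-1 - l : ZMod n) = -1 - k + 1) ↔ k = l + 1 :=
            ⟨fun h => by linear_combination h, fun h => by linear_combination h⟩
          have e2' : ((-1 - l : ZMod n) = -k) ↔ k = l + 1 :=
            ⟨fun h => by linear_combination h, fun h => by linear_combination h⟩
          have e3 : (l = k + 1 ∨ k = l + 1) ↔ (k = l + 1 ∨ l = k + 1) := or_comm
          simp [e1, e1', e2, e2', e3, hk0, hkm, hl0, hlm]



lemma indicator_or_split {P Q : Prop} [Decidable P] [Decidable Q] (h : ¬(P ∧ Q)) :
    (if P ∨ Q then (1:ℝ) else 0) = (if P then (1:ℝ) else 0) + (if Q then (1:ℝ) else 0) := by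
  by_cases hp : P
  · by_cases hq : Q
    · exact absurd ⟨hp, hq⟩ h
    · simp [hp, hq]
  · by_cases hq : Q <;> simp [hp, hq]

lemma sE_apply_eq {σ : Equiv.Perm (ZMod n)} {u v : ZMod n} {p q : ZMod n}
    (huv : u ≠ v) (hu : σ u = p) (hv : σ v = q) (i j : ZMod n) :
    (if σ i = p ∧ σ j = q ∨ σ i = q ∧ σ j = p then (1:ℝ) else 0) = sE u v i j := by
  have e1 : (σ i = p) ↔ (u = i) := by
    rw [← hu]; constructor
    · intro h; exact (σ.injective h).symm
    · intro h; rw [h]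
  have e2 : (σ j = q) ↔ (v = j) := by
    rw [← hv]; constructor
    · intro h; exact (σ.injective h).symm
    · intro h; rw [h]
  have e3 : (σ i = q) ↔ (v = i) := by
    rw [← hv]; constructor
    · intro h; exact (σ.injective h).symm
    · intro h; rw [h]
  have e4 : (σ j = p) ↔ (u = j) := by
    rw [← hu]; constructor
    · intro h; exact (σ.injective h).symm
    · intro h; rw [h]
  have hex : ¬((u = i ∧ v = j) ∧ (v = i ∧ u = j)) := by
    rintro ⟨⟨h1, h2⟩, ⟨h3, h4⟩⟩
    exact huv (h1.trans h3.symm)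
  have : sE u v i j = (if u = i ∧ v = j then (1:ℝ) else 0) + (if v = i ∧ u = j then 1 else 0) := by
    simp [sE, Matrix.add_apply, Matrix.single, Matrix.of_apply]
  rw [this, ← indicator_or_split hex]
  exact if_congr (or_congr (and_congr e1 e2) (and_congr e3 e4)) rfl rfl


lemma cycM_sub_eq (hn : 4 ≤ n) {a b c d : ZMod n} (hab : a ≠ b) (hac : a ≠ c) (had : a ≠ d)
    (hbc : b ≠ c) (hbd : b ≠ d) (hcd : c ≠ d) {σ : Equiv.Perm (ZMod n)}
    (ha : σ a = 0) (hb : σ b = 1) (hc : σ c = -2) (hd : σ d = -1) :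
    cycM σ - cycM (rPerm n * σ) = Dm a b c d := by
  funext i j
  simp only [Matrix.sub_apply]
  have hmul : ∀ x, (rPerm n * σ) x = rPerm n (σ x) := fun x => rfl
  have hk := key hn (σ i) (σ j)
  show (if σ i = σ j + 1 ∨ σ j = σ i + 1 then (1:ℝ) else 0)
      - (if (rPerm n * σ) i = (rPerm n * σ) j + 1 ∨ (rPerm n * σ) j = (rPerm n * σ) i + 1
          then (1:ℝ) else 0) = Dm a b c d i j
  rw [hmul, hmul, hk]
  rw [sE_apply_eq hab ha hb, sE_apply_eq hcd hc hd, sE_apply_eq hac ha hc,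
    sE_apply_eq hbd hb hd]
  simp [Dm, Matrix.sub_apply, Matrix.add_apply]


lemma genD_sub_direction (hn : 4 ≤ n) :
    genD n ⊆ (affineSpan ℝ (hamiltonianCycleMatrices n)).direction := by
  rintro x ⟨a, b, c, d, hab, hac, had, hbc, hbd, hcd, rfl⟩
  obtain ⟨σ, ha, hb, hc, hd⟩ := exists_perm hn hab hac had hbc hbd hcd
  have heq : cycM σ - cycM (rPerm n * σ) = Dm a b c d :=
    cycM_sub_eq hn hab hac had hbc hbd hcd ha hb hc hd
  rw [← heq]
  exact AffineSubspace.vsub_mem_direction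
    (subset_affineSpan ℝ _ (cycM_mem σ)) (subset_affineSpan ℝ _ (cycM_mem _))

lemma Tsub_le_spanD (hn : 4 ≤ n) : Tsub n ≤ Submodule.span ℝ (genD n) := by
  rw [← Subspace.dualAnnihilator_le_dualAnnihilator_iff]
  intro f hf
  rw [Submodule.mem_dualAnnihilator] at hf ⊢
  intro x hx
  obtain ⟨hxs, hxd, hxr⟩ := hx
  set w : ZMod n → ZMod n → ℝ := fun i j => f (Matrix.single i j 1) with hw
  set z : ZMod n → ZMod n → ℝ := fun i j => f (sE i j) with hzdef
  have hz : ∀ i j, z i j = w i j + w j i := by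
    intro i j
    simp only [hzdef, hw, sE, map_add]
  have hzsymm : ∀ i j, z i j = z j i := by
    intro i j
    rw [hz i j, hz j i]
    ring
  have hzrel : ∀ a b c d : ZMod n, a ≠ b → a ≠ c → a ≠ d → b ≠ c → b ≠ d → c ≠ d →
      z a b + z c d - z a c - z b d = 0 := by
    intro a b c d hab hac had hbc hbd hcd
    have hmem : Dm a b c d ∈ Submodule.span ℝ (genD n) :=
      Submodule.subset_span ⟨a, b, c, d, hab, hac, had, hbc, hbd, hcd, rfl⟩
    have h0 := hf _ hmem
    simp only [Dm, map_add, map_sub] at h0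
    simp only [hzdef]
    linarith [h0]
  have c10 : (1:ZMod n) ≠ 0 := one_ne hn
  have c01 : (0:ZMod n) ≠ 1 := fun h => c10 h.symm
  have c20 : (2:ZMod n) ≠ 0 := two_ne hn
  have c02 : (0:ZMod n) ≠ 2 := fun h => c20 h.symm
  have c21 : (2:ZMod n) ≠ 1 := fun h => one_ne hn (by linear_combination h)
  have c12 : (1:ZMod n) ≠ 2 := fun h => c21 h.symm
  have h1v : ∀ v : ZMod n, v ≠ 0 → v ≠ 1 → v ≠ 2 → z 1 v = z 0 v + z 1 2 - z 0 2 := by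
    intro v h0 h1 h2
    have hr := hzrel 1 v 2 0 (fun h => h1 h.symm) c12 c10 h2 h0 c20
    linarith [hzsymm 2 0, hzsymm v 0]
  have h2v : ∀ v : ZMod n, v ≠ 0 → v ≠ 1 → v ≠ 2 → z 2 v = z 0 v + z 1 2 - z 0 1 := by
    intro v h0 h1 h2
    have hr := hzrel 2 v 1 0 (fun h => h2 h.symm) c21 c20 h1 h0 c10
    linarith [hzsymm 2 1, hzsymm 1 0, hzsymm v 0]
  have huvgen : ∀ u v : ZMod n, u ≠ v → u ≠ 0 → u ≠ 1 → u ≠ 2 → v ≠ 0 → v ≠ 1 → v ≠ 2 →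
      z u v = z 0 u + z 0 v - z 0 1 - z 0 2 + z 1 2 := by
    intro u v huv hu0 hu1 hu2 hv0 hv1 hv2
    have hr := hzrel u v 0 1 huv hu0 hu1 hv0 hv1 c01
    have h1 := h1v v hv0 hv1 hv2
    linarith [hzsymm u 0, hzsymm v 1]
  set p : ZMod n → ℝ := fun a => if a = 0 then (z 0 1 + z 0 2 - z 1 2)/2
      else if a = 1 then (z 0 1 + z 1 2 - z 0 2)/2
      else if a = 2 then (z 0 2 + z 1 2 - z 0 1)/2
      else z 0 a - (z 0 1 + z 0 2 - z 1 2)/2 with hpdef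
  have hp0 : p 0 = (z 0 1 + z 0 2 - z 1 2)/2 := by rw [hpdef]; simp
  have hp1 : p 1 = (z 0 1 + z 1 2 - z 0 2)/2 := by rw [hpdef]; simp [c10]
  have hp2 : p 2 = (z 0 2 + z 1 2 - z 0 1)/2 := by rw [hpdef]; simp [c20, c21]
  have hpg : ∀ a : ZMod n, a ≠ 0 → a ≠ 1 → a ≠ 2 → p a = z 0 a - (z 0 1 + z 0 2 - z 1 2)/2 := by
    intro a h0 h1 h2
    rw [hpdef]; simp [h0, h1, h2]
  have hp : ∀ u v : ZMod n, u ≠ v → z u v = p u + p v := by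
    intro u v huv
    by_cases hu0 : u = 0
    · subst hu0
      by_cases hv1 : v = 1
      · subst hv1; rw [hp0, hp1]; ring
      · by_cases hv2 : v = 2
        · subst hv2; rw [hp0, hp2]; ring
        · have hv0 : v ≠ 0 := fun h => huv h.symm
          rw [hp0, hpg v hv0 hv1 hv2]; ring
    · by_cases hu1 : u = 1
      · subst hu1
        by_cases hv0 : v = 0
        · subst hv0; rw [hp1, hp0]; linarith [hzsymm 1 0]
        · by_cases hv2 : v = 2
          · subst hv2; rw [hp1, hp2]; ring
          · have hv1 : v ≠ 1 := fun h => huv h.symm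
            rw [hp1, hpg v hv0 hv1 hv2]
            linarith [h1v v hv0 hv1 hv2]
      · by_cases hu2 : u = 2
        · subst hu2
          by_cases hv0 : v = 0
          · subst hv0; rw [hp2, hp0]; linarith [hzsymm 2 0]
          · by_cases hv1 : v = 1
            · subst hv1; rw [hp2, hp1]; linarith [hzsymm 2 1]
            · have hv2 : v ≠ 2 := fun h => huv h.symm
              rw [hp2, hpg v hv0 hv1 hv2]
              linarith [h2v v hv0 hv1 hv2]
        · by_cases hv0 : v = 0
          · subst hv0
            rw [hpg u hu0 hu1 hu2, hp0]; linarith [hzsymm u 0]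
          · by_cases hv1 : v = 1
            · subst hv1
              rw [hpg u hu0 hu1 hu2, hp1]
              linarith [hzsymm u 1, h1v u hu0 hu1 hu2]
            · by_cases hv2 : v = 2
              · subst hv2
                rw [hpg u hu0 hu1 hu2, hp2]
                linarith [hzsymm u 2, h2v u hu0 hu1 hu2]
              · rw [hpg u hu0 hu1 hu2, hpg v hv0 hv1 hv2]
                linarith [huvgen u v huv hu0 hu1 hu2 hv0 hv1 hv2]
  have hfx : f x = ∑ i, ∑ j, x i j * w i j := by
    conv_lhs => rw [Matrix.matrix_eq_sum_single x]
    rw [map_sum]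
    refine Finset.sum_congr rfl fun i _ => ?_
    rw [map_sum]
    refine Finset.sum_congr rfl fun j _ => ?_
    have hsm : Matrix.single i j (x i j) = x i j • Matrix.single i j (1:ℝ) := by
      rw [Matrix.smul_single, smul_eq_mul, mul_one]
    rw [hsm, map_smul, smul_eq_mul]
  have hswap : (∑ i, ∑ j, x i j * w j i) = ∑ i, ∑ j, x i j * w i j := by
    rw [Finset.sum_comm]
    exact Finset.sum_congr rfl fun i _ => Finset.sum_congr rfl fun j _ => by rw [hxs j i]
  have h2fx : (∑ i, ∑ j, x i j * z i j) = 2 * f x := by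
    calc ∑ i, ∑ j, x i j * z i j
        = (∑ i, ∑ j, x i j * w i j) + (∑ i, ∑ j, x i j * w j i) := by
          rw [← Finset.sum_add_distrib]
          refine Finset.sum_congr rfl fun i _ => ?_
          rw [← Finset.sum_add_distrib]
          refine Finset.sum_congr rfl fun j _ => ?_
          rw [hz i j]
          ring
      _ = 2 * f x := by
          rw [hswap, ← hfx]
          ring
  have hsum0 : (∑ i, ∑ j, x i j * z i j) = 0 := by
    have hstep : ∀ i j : ZMod n, x i j * z i j = x i j * p i + x i j * p j := by
      intro i j
      by_cases hij : i = j
      · subst hij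
        rw [hxd i]
        ring
      · rw [hp i j hij]
        ring
    calc ∑ i, ∑ j, x i j * z i j
        = (∑ i, ∑ j, x i j * p i) + ∑ i, ∑ j, x i j * p j := by
          rw [← Finset.sum_add_distrib]
          refine Finset.sum_congr rfl fun i _ => ?_
          rw [← Finset.sum_add_distrib]
          exact Finset.sum_congr rfl fun j _ => hstep i j
      _ = 0 := by
          have hA : (∑ i, ∑ j, x i j * p i) = 0 := by
            refine Finset.sum_eq_zero fun i _ => ?_
            rw [← Finset.sum_mul, hxr i, zero_mul]
          have hB : (∑ i, ∑ j, x i j * p j) = 0 := by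
            rw [Finset.sum_comm]
            refine Finset.sum_eq_zero fun j _ => ?_
            have hcol : (∑ i, x i j) = 0 := by
              rw [Finset.sum_congr rfl fun i _ => hxs i j]
              exact hxr j
            rw [← Finset.sum_mul, hcol, zero_mul]
          rw [hA, hB, add_zero]
  rw [hsum0] at h2fx
  linarith

lemma mem_Tsub_iff (hn : 4 ≤ n) (M : Matrix (ZMod n) (ZMod n) ℝ) :
    M - cycM 1 ∈ Tsub n ↔
      (∀ i j, M i j = M j i) ∧ (∀ i, M i i = 0) ∧
        (∀ i, ∑ j, M i j = 2) ∧ (∀ j, ∑ i, M i j = 2) := by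
  constructor
  · rintro ⟨hs, hd, hr⟩
    have hsym : ∀ i j, M i j = M j i := by
      intro i j
      have := hs i j
      simp only [Matrix.sub_apply] at this
      have hc := cycM_symm (n := n) 1 i j
      linarith
    have hrow : ∀ i, ∑ j, M i j = 2 := by
      intro i
      have := hr i
      simp only [Matrix.sub_apply] at this
      rw [Finset.sum_sub_distrib, cycM_rowsum hn 1 i] at this
      linarith
    refine ⟨hsym, fun i => ?_, hrow, fun j => ?_⟩
    · have := hd i
      simp only [Matrix.sub_apply] at this
      have hc := cycM_diag hn (n := n) 1 i
      linarith
    · rw [Finset.sum_congr rfl fun i _ => hsym i j]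
      exact hrow j
  · rintro ⟨hs, hd, hr, hc⟩
    refine ⟨fun i j => ?_, fun i => ?_, fun i => ?_⟩
    · simp only [Matrix.sub_apply]
      rw [hs i j, cycM_symm]
    · simp only [Matrix.sub_apply]
      rw [hd i, cycM_diag hn]
      ring
    · simp only [Matrix.sub_apply]
      rw [Finset.sum_sub_distrib, hr i, cycM_rowsum hn 1 i]
      ring

end TSPAux

open TSPAux in

/-- For `n ≥ 4`, the affine hull of the symmetric Traveling Salesman
Polytope `ST_n` equals the set of symmetric `n × n` matrices with zero diagonal whose row
sums and column sums all equal `2`. -/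
theorem affineSpan_symmetricTSP (n : ℕ) [NeZero n] (hn : 4 ≤ n) :
    (affineSpan ℝ (symmetricTSP n) : Set (Matrix (ZMod n) (ZMod n) ℝ)) =
      {M | (∀ i j, M i j = M j i) ∧ (∀ i, M i i = 0) ∧
           (∀ i, ∑ j, M i j = 2) ∧ (∀ j, ∑ i, M i j = 2)} := by
  have hspan : affineSpan ℝ (symmetricTSP n) = affineSpan ℝ (hamiltonianCycleMatrices n) :=
    affineSpan_convexHull (hamiltonianCycleMatrices n)
  rw [hspan]
  apply Set.eq_of_subset_of_subset
  · intro M hM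
    simp only [Set.mem_setOf_eq]
    rw [← mem_Tsub_iff hn]
    have hle : affineSpan ℝ (hamiltonianCycleMatrices n) ≤
        AffineSubspace.mk' (cycM 1) (Tsub n) := by
      rw [affineSpan_le]
      rintro x ⟨σ, hσ⟩
      have hx : x = cycM σ := by
        ext i j; exact hσ i j
      subst hx
      show cycM σ ∈ AffineSubspace.mk' (cycM 1) (Tsub n)
      rw [AffineSubspace.mem_mk']
      show cycM σ - cycM 1 ∈ Tsub n
      rw [mem_Tsub_iff hn]
      exact ⟨cycM_symm σ, cycM_diag hn σ, cycM_rowsum hn σ, fun j => by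
        rw [Finset.sum_congr rfl fun i _ => cycM_symm σ i j]; exact cycM_rowsum hn σ j⟩
    have h3 : M ∈ AffineSubspace.mk' (cycM 1) (Tsub n) := hle hM
    exact AffineSubspace.mem_mk'.mp h3
  · rintro M hM
    simp only [Set.mem_setOf_eq] at hM
    rw [← mem_Tsub_iff hn] at hM
    have h1 : M - cycM 1 ∈ (affineSpan ℝ (hamiltonianCycleMatrices n)).direction := by
      have := Tsub_le_spanD hn hM
      refine Submodule.span_le.mpr (genD_sub_direction hn) this
    have h2 : cycM (1 : Equiv.Perm (ZMod n)) ∈ affineSpan ℝ (hamiltonianCycleMatrices n) :=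
      subset_affineSpan ℝ _ (cycM_mem 1)
    have := AffineSubspace.vadd_mem_of_mem_direction h1 h2
    simpa using this
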